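/- Let D₀, …, D_{n-1} be pairwise interior-disjoint closed disks in the Euclidean plane with centers p₀, …, p_{n-1} and positive radii, and let G be their intersection graph on Fin n. Assume that every closed disk of radius 1 contains at most n/10 of the centers p_i, and that the closed disk of radius 1 centered at the origin contains at least n/10 of the centers. Let x ∈ [1,2], let C_x be the circle of radius x centered at the origin, and let S = {i : D_i ∩ C_x ≠ ∅}. Then every connected component of the induced subgraph of G on the complement of S has at most (9/10)·n vertices. -/

import Mathlib

open Metric Set

noncomputable def ptE (a b : ℝ) : EuclideanSpace ℝ (Fin 2) := (WithLp.equiv 2 (Fin 2 → ℝ)).symm ![a, b]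

lemma grid1 (t : ℝ) (ht : |t| ≤ 2) :
    ∃ a : ℝ, (a = -4/3 ∨ a = 0 ∨ a = 4/3) ∧ |t - a| ≤ 2/3 := by
  rw [abs_le] at ht
  rcases le_or_gt t (-2/3) with h | h
  · exact ⟨-4/3, Or.inl rfl, by rw [abs_le]; constructor <;> linarith⟩
  rcases le_or_gt t (2/3) with h2 | h2
  · exact ⟨0, Or.inr (Or.inl rfl), by rw [abs_le]; constructor <;> linarith⟩
  · exact ⟨4/3, Or.inr (Or.inr rfl), by rw [abs_le]; constructor <;> linarith⟩

lemma close_to_grid (q : EuclideanSpace ℝ (Fin 2)) (hq : q ∈ closedBall (0:EuclideanSpace ℝ (Fin 2)) 2) :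
    ∃ a b : ℝ, (a = -4/3 ∨ a = 0 ∨ a = 4/3) ∧ (b = -4/3 ∨ b = 0 ∨ b = 4/3) ∧
      q ∈ closedBall (ptE a b) 1 := by
  rw [mem_closedBall, EuclideanSpace.dist_eq] at hq
  have hcoord : ∀ j : Fin 2, |q j| ≤ 2 := by
    intro j
    have h1 : (q j) ^ 2 ≤ ∑ i : Fin 2, dist (q i) ((0:EuclideanSpace ℝ (Fin 2)) i) ^ 2 := by
      have := Finset.single_le_sum (f := fun i => dist (q i) ((0:EuclideanSpace ℝ (Fin 2)) i) ^ 2)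
        (fun i _ => sq_nonneg _) (Finset.mem_univ j)
      simpa [Real.dist_eq, sq_abs] using this
    have h2 : Real.sqrt ((q j)^2) ≤ 2 := le_trans (Real.sqrt_le_sqrt h1) hq
    rwa [Real.sqrt_sq_eq_abs] at h2
  obtain ⟨a, ha, hta⟩ := grid1 (q 0) (hcoord 0)
  obtain ⟨b, hb, htb⟩ := grid1 (q 1) (hcoord 1)
  refine ⟨a, b, ha, hb, ?_⟩
  rw [mem_closedBall, EuclideanSpace.dist_eq]
  have e0 : (ptE a b) 0 = a := rfl
  have e1 : (ptE a b) 1 = b := rfl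
  rw [Fin.sum_univ_two, e0, e1]
  have : dist (q 0) a ^ 2 + dist (q 1) b ^ 2 ≤ 1 := by
    rw [Real.dist_eq, Real.dist_eq]
    have h1 : |q 0 - a|^2 ≤ (2/3)^2 := by
      apply sq_le_sq' <;> [linarith [abs_nonneg (q 0 - a)]; exact hta]
    have h2 : |q 1 - b|^2 ≤ (2/3)^2 := by
      apply sq_le_sq' <;> [linarith [abs_nonneg (q 1 - b)]; exact htb]
    nlinarith
  calc Real.sqrt (dist (q 0) a ^ 2 + dist (q 1) b ^ 2) ≤ Real.sqrt 1 := Real.sqrt_le_sqrt this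
    _ = 1 := Real.sqrt_one

lemma nine_cover (n : ℕ) (p : Fin n → EuclideanSpace ℝ (Fin 2))
    (hdense : ∀ c : EuclideanSpace ℝ (Fin 2),
      (({i : Fin n | p i ∈ Metric.closedBall c 1}).ncard : ℝ) ≤ n / 10) :
    (({i : Fin n | p i ∈ Metric.closedBall (0:EuclideanSpace ℝ (Fin 2)) 2}).ncard : ℝ) ≤
      9/10 * n := by
  set A : ℝ → ℝ → Set (Fin n) := fun a b => {i | p i ∈ closedBall (ptE a b) 1} with hA
  have hsub : {i : Fin n | p i ∈ closedBall (0:EuclideanSpace ℝ (Fin 2)) 2} ⊆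
      A (-4/3) (-4/3) ∪ A (-4/3) 0 ∪ A (-4/3) (4/3) ∪ A 0 (-4/3) ∪ A 0 0 ∪ A 0 (4/3) ∪
      A (4/3) (-4/3) ∪ A (4/3) 0 ∪ A (4/3) (4/3) := by
    intro i hi
    obtain ⟨a, b, ha, hb, h⟩ := close_to_grid (p i) hi
    have hm : i ∈ A a b := h
    simp only [mem_union]
    rcases ha with rfl | rfl | rfl <;> rcases hb with rfl | rfl | rfl
    · exact Or.inl (Or.inl (Or.inl (Or.inl (Or.inl (Or.inl (Or.inl (Or.inl hm)))))))
    · exact Or.inl (Or.inl (Or.inl (Or.inl (Or.inl (Or.inl (Or.inl (Or.inr hm)))))))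
    · exact Or.inl (Or.inl (Or.inl (Or.inl (Or.inl (Or.inl (Or.inr hm))))))
    · exact Or.inl (Or.inl (Or.inl (Or.inl (Or.inl (Or.inr hm)))))
    · exact Or.inl (Or.inl (Or.inl (Or.inl (Or.inr hm))))
    · exact Or.inl (Or.inl (Or.inl (Or.inr hm)))
    · exact Or.inl (Or.inl (Or.inr hm))
    · exact Or.inl (Or.inr hm)
    · exact Or.inr hm
  have hcard : ({i : Fin n | p i ∈ closedBall (0:EuclideanSpace ℝ (Fin 2)) 2}).ncard ≤
      (A (-4/3) (-4/3)).ncard + (A (-4/3) 0).ncard + (A (-4/3) (4/3)).ncard + (A 0 (-4/3)).ncard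
      + (A 0 0).ncard + (A 0 (4/3)).ncard + (A (4/3) (-4/3)).ncard + (A (4/3) 0).ncard
      + (A (4/3) (4/3)).ncard := by
    refine le_trans (Set.ncard_le_ncard hsub (toFinite _)) ?_
    refine le_trans (Set.ncard_union_le _ _) ?_
    gcongr ?_ + _
    refine le_trans (Set.ncard_union_le _ _) ?_
    gcongr ?_ + _
    refine le_trans (Set.ncard_union_le _ _) ?_
    gcongr ?_ + _
    refine le_trans (Set.ncard_union_le _ _) ?_
    gcongr ?_ + _
    refine le_trans (Set.ncard_union_le _ _) ?_
    gcongr ?_ + _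
    refine le_trans (Set.ncard_union_le _ _) ?_
    gcongr ?_ + _
    refine le_trans (Set.ncard_union_le _ _) ?_
    gcongr ?_ + _
    exact Set.ncard_union_le _ _
  have hd : ∀ a b : ℝ, ((A a b).ncard : ℝ) ≤ n / 10 := fun a b => hdense (ptE a b)
  have := hd (-4/3) (-4/3); have := hd (-4/3) 0; have := hd (-4/3) (4/3)
  have := hd 0 (-4/3); have := hd 0 0; have := hd 0 (4/3)
  have := hd (4/3) (-4/3); have := hd (4/3) 0; have := hd (4/3) (4/3)
  have hcast : (({i : Fin n | p i ∈ closedBall (0:EuclideanSpace ℝ (Fin 2)) 2}).ncard : ℝ) ≤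
      ((A (-4/3) (-4/3)).ncard : ℝ) + (A (-4/3) 0).ncard + (A (-4/3) (4/3)).ncard
      + (A 0 (-4/3)).ncard + (A 0 0).ncard + (A 0 (4/3)).ncard + (A (4/3) (-4/3)).ncard
      + (A (4/3) 0).ncard + (A (4/3) (4/3)).ncard := by exact_mod_cast hcard
  linarith



/-- Removing from the intersection graph of a family of pairwise interior-disjoint
disks all disks meeting the circle of radius `x ∈ [1,2]` centered at the origin leaves
connected components of size at most `(9/10) n`, provided every unit disk contains at
most `n/10` of the centers and the unit disk at the origin contains at least `n/10`
of the centers. -/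
theorem separator_components_small
    (n : ℕ) (p : Fin n → EuclideanSpace ℝ (Fin 2)) (r : Fin n → ℝ)
    (hr : ∀ i, 0 < r i)
    (hdisj : Pairwise fun i j =>
      Disjoint (Metric.ball (p i) (r i)) (Metric.ball (p j) (r j)))
    (G : SimpleGraph (Fin n))
    (hG : ∀ i j, G.Adj i j ↔ i ≠ j ∧
      (Metric.closedBall (p i) (r i) ∩ Metric.closedBall (p j) (r j)).Nonempty)
    (hdense : ∀ c : EuclideanSpace ℝ (Fin 2),
      (({i : Fin n | p i ∈ Metric.closedBall c 1}).ncard : ℝ) ≤ n / 10)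
    (horigin : (n : ℝ) / 10 ≤
      (({i : Fin n | p i ∈ Metric.closedBall (0 : EuclideanSpace ℝ (Fin 2)) 1}).ncard : ℝ))
    (x : ℝ) (hx : x ∈ Set.Icc (1 : ℝ) 2)
    (S : Set (Fin n))
    (hS : S = {i | (Metric.closedBall (p i) (r i) ∩
      Metric.sphere (0 : EuclideanSpace ℝ (Fin 2)) x).Nonempty}) :
    ∀ C : (G.induce Sᶜ).ConnectedComponent,
      (({v : ↥Sᶜ | (G.induce Sᶜ).connectedComponentMk v = C}).ncard : ℝ) ≤
        (9 / 10 : ℝ) * n := by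
  intro C
  obtain ⟨v₀, hv₀⟩ := C.exists_rep
  have side : ∀ i : Fin n, i ∉ S →
      closedBall (p i) (r i) ⊆ ball (0:EuclideanSpace ℝ (Fin 2)) x ∨
      closedBall (p i) (r i) ⊆ (closedBall (0:EuclideanSpace ℝ (Fin 2)) x)ᶜ := by
    intro i hi
    have hemp : closedBall (p i) (r i) ∩ sphere (0:EuclideanSpace ℝ (Fin 2)) x = ∅ := by
      rw [hS] at hi
      simpa [Set.not_nonempty_iff_eq_empty] using hi
    refine IsPreconnected.subset_or_subset isOpen_ball
      Metric.isClosed_closedBall.isOpen_compl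
      (disjoint_compl_right.mono_left ball_subset_closedBall) ?_
      (convex_closedBall _ _).isPreconnected
    intro y hy
    rcases lt_trichotomy (dist y (0:EuclideanSpace ℝ (Fin 2))) x with h | h | h
    · exact Or.inl (mem_ball.mpr h)
    · exact absurd (Set.mem_inter hy (Metric.mem_sphere.mpr h)) (by simp [hemp])
    · exact Or.inr (fun hc => (not_le.mpr h) (mem_closedBall.mp hc))
  have adj_same : ∀ u v : ↥Sᶜ, (G.induce Sᶜ).Adj u v →
      closedBall (p u.val) (r u.val) ⊆ ball (0:EuclideanSpace ℝ (Fin 2)) x →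
      closedBall (p v.val) (r v.val) ⊆ ball (0:EuclideanSpace ℝ (Fin 2)) x := by
    intro u v huv hin
    have hadj : G.Adj u.val v.val := huv
    obtain ⟨-, y, hyu, hyv⟩ := (hG _ _).1 hadj
    rcases side v.val v.prop with h | h
    · exact h
    · exact absurd (ball_subset_closedBall (hin hyu)) (h hyv)
  have reach_same : ∀ u v : ↥Sᶜ, (G.induce Sᶜ).Reachable u v →
      closedBall (p u.val) (r u.val) ⊆ ball (0:EuclideanSpace ℝ (Fin 2)) x →
      closedBall (p v.val) (r v.val) ⊆ ball (0:EuclideanSpace ℝ (Fin 2)) x := by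
    intro u v h
    obtain ⟨w⟩ := h
    induction w with
    | nil => exact id
    | cons h' _ ih => exact fun hin => ih (adj_same _ _ h' hin)
  have hmemreach : ∀ v ∈ {v : ↥Sᶜ | (G.induce Sᶜ).connectedComponentMk v = C},
      (G.induce Sᶜ).Reachable v₀ v :=
    fun v hv => SimpleGraph.ConnectedComponent.eq.mp (hv₀.trans hv.symm)
  have hself : ∀ i : Fin n, p i ∈ closedBall (p i) (r i) := fun i =>
    mem_closedBall_self (hr i).le
  have himgcard : (({v : ↥Sᶜ | (G.induce Sᶜ).connectedComponentMk v = C}).ncard : ℝ)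
      = ((Subtype.val '' {v : ↥Sᶜ | (G.induce Sᶜ).connectedComponentMk v = C}).ncard : ℝ) := by
    rw [Set.ncard_image_of_injective _ Subtype.val_injective]
  rcases side v₀.val v₀.prop with hin | hout
  · -- inside case
    have hsubset : Subtype.val '' {v : ↥Sᶜ | (G.induce Sᶜ).connectedComponentMk v = C} ⊆
        {i : Fin n | p i ∈ closedBall (0:EuclideanSpace ℝ (Fin 2)) 2} := by
      rintro i ⟨v, hv, rfl⟩
      have hInv := reach_same v₀ v (hmemreach v hv) hin
      have hpv : p v.val ∈ ball (0:EuclideanSpace ℝ (Fin 2)) x := hInv (hself v.val)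
      have := mem_ball.mp hpv
      simp only [Set.mem_setOf_eq, mem_closedBall]
      linarith [hx.2]
    rw [himgcard]
    calc ((Subtype.val '' {v : ↥Sᶜ | (G.induce Sᶜ).connectedComponentMk v = C}).ncard : ℝ)
        ≤ (({i : Fin n | p i ∈ closedBall (0:EuclideanSpace ℝ (Fin 2)) 2}).ncard : ℝ) := by
          exact_mod_cast Set.ncard_le_ncard hsubset (toFinite _)
      _ ≤ 9/10 * n := nine_cover n p hdense
  · -- outside case
    have hsubset : Subtype.val '' {v : ↥Sᶜ | (G.induce Sᶜ).connectedComponentMk v = C} ⊆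
        {i : Fin n | p i ∈ closedBall (0:EuclideanSpace ℝ (Fin 2)) 1}ᶜ := by
      rintro i ⟨v, hv, rfl⟩
      have hOutv : closedBall (p v.val) (r v.val) ⊆
          (closedBall (0:EuclideanSpace ℝ (Fin 2)) x)ᶜ := by
        rcases side v.val v.prop with h | h
        · exfalso
          have hinv₀ := reach_same v v₀ (hmemreach v hv).symm h
          have h1 : p v₀.val ∈ ball (0:EuclideanSpace ℝ (Fin 2)) x := hinv₀ (hself v₀.val)
          exact (hout (hself v₀.val)) (ball_subset_closedBall h1)
        · exact h
      have h2 : p v.val ∉ closedBall (0:EuclideanSpace ℝ (Fin 2)) x := hOutv (hself v.val)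
      simp only [Set.mem_compl_iff, Set.mem_setOf_eq, mem_closedBall] at h2 ⊢
      intro hle
      exact h2 (by linarith [hx.1])
    have hcompl := Set.ncard_add_ncard_compl
      {i : Fin n | p i ∈ closedBall (0:EuclideanSpace ℝ (Fin 2)) 1} (toFinite _) (toFinite _)
    rw [Nat.card_eq_fintype_card, Fintype.card_fin] at hcompl
    have hle : (({v : ↥Sᶜ | (G.induce Sᶜ).connectedComponentMk v = C}).ncard : ℝ)
        ≤ (({i : Fin n | p i ∈ closedBall (0:EuclideanSpace ℝ (Fin 2)) 1}ᶜ).ncard : ℝ) := by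
      rw [himgcard]
      exact_mod_cast Set.ncard_le_ncard hsubset (toFinite _)
    have hcast : (({i : Fin n | p i ∈ closedBall (0:EuclideanSpace ℝ (Fin 2)) 1}).ncard : ℝ)
        + (({i : Fin n | p i ∈ closedBall (0:EuclideanSpace ℝ (Fin 2)) 1}ᶜ).ncard : ℝ) = n := by
      exact_mod_cast hcompl
    linarith
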